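/- arXiv:1911.00731 — 2 statements merged into one kernel-verified Lean document; each statement's English description precedes it below -/
import Mathlib

section
/- (Deterministic grid argmin lemma, core of the proof of Theorem 1.) Let E be a real inner product space, K ⊆ E convex, λ > 0, ε > 0, and F : E → ℝ differentiable on K with: F λ-strongly convex on K (i.e. F(θ₂) ≥ F(θ₁) + ⟨∇F(θ₁), θ₂ − θ₁⟩ + λ‖θ₂ − θ₁‖² for all θ₁, θ₂ ∈ K), ∇F 1-Lipschitz on K, and θ* ∈ K with ∇F(θ*) = 0. Let T ⊆ K be a nonempty finite set containing some point p* with ‖p* − θ*‖ ≤ ε/2, let Ĝ : T → E satisfy ‖Ĝ(p) − ∇F(p)‖ ≤ ε/4 for all p ∈ T, and let θ̂ ∈ T minimize ‖Ĝ(p)‖ over p ∈ T. Then ‖θ̂ − θ*‖ ≤ ε/λ. -/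
open InnerProductSpace

/-- **Deterministic grid argmin lemma (core of the proof of Theorem 1).**
If `F` is `λ`-strongly convex on a convex set `K` with `1`-Lipschitz gradient and minimizer
`θ*` (with `∇F(θ*) = 0`), `T ⊆ K` is a finite set containing a point `p*` with
`‖p* − θ*‖ ≤ ε/2`, `Ĝ` is an `ε/4`-accurate approximation of `∇F` on `T`, and `θ̂` minimizes
`‖Ĝ(p)‖` over `T`, then `‖θ̂ − θ*‖ ≤ ε/λ`. -/
theorem grid_argmin_close_to_minimizer
    {E : Type*} [NormedAddCommGroup E] [InnerProductSpace ℝ E]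
    (K : Set E) (hK : Convex ℝ K) (lam eps : ℝ) (hlam : 0 < lam) (heps : 0 < eps)
    (F : E → ℝ) (gF : E → E)
    (hdiff : ∀ θ ∈ K, HasFDerivWithinAt F ((toDualMap ℝ E) (gF θ) : E →L[ℝ] ℝ) K θ)
    (hsc : ∀ θ₁ ∈ K, ∀ θ₂ ∈ K,
      F θ₁ + ⟪gF θ₁, θ₂ - θ₁⟫_ℝ + lam * ‖θ₂ - θ₁‖ ^ 2 ≤ F θ₂)
    (hLip : ∀ θ ∈ K, ∀ θ' ∈ K, ‖gF θ - gF θ'‖ ≤ ‖θ - θ'‖)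
    (θstar : E) (hθstarK : θstar ∈ K) (hgrad0 : gF θstar = 0)
    (T : Finset E) (hTK : ↑T ⊆ K) (hTne : T.Nonempty)
    (pstar : E) (hpstarT : pstar ∈ T) (hpstar : ‖pstar - θstar‖ ≤ eps / 2)
    (Ghat : E → E) (hGhat : ∀ p ∈ T, ‖Ghat p - gF p‖ ≤ eps / 4)
    (θhat : E) (hθhatT : θhat ∈ T) (hmin : ∀ p ∈ T, ‖Ghat θhat‖ ≤ ‖Ghat p‖) :
    ‖θhat - θstar‖ ≤ eps / lam := by
  have hθhatK : θhat ∈ K := hTK hθhatT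
  have hpK : pstar ∈ K := hTK hpstarT
  -- bound on the true gradient at θhat
  have hg : ‖gF θhat‖ ≤ eps := by
    have h1 : ‖gF θhat‖ ≤ ‖Ghat θhat‖ + eps / 4 := by
      have := hGhat θhat hθhatT
      calc ‖gF θhat‖ = ‖Ghat θhat - (Ghat θhat - gF θhat)‖ := by congr 1; abel
        _ ≤ ‖Ghat θhat‖ + ‖Ghat θhat - gF θhat‖ := norm_sub_le _ _
        _ ≤ ‖Ghat θhat‖ + eps / 4 := by linarith
    have h2 : ‖Ghat pstar‖ ≤ ‖gF pstar‖ + eps / 4 := by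
      have := hGhat pstar hpstarT
      calc ‖Ghat pstar‖ = ‖gF pstar + (Ghat pstar - gF pstar)‖ := by congr 1; abel
        _ ≤ ‖gF pstar‖ + ‖Ghat pstar - gF pstar‖ := norm_add_le _ _
        _ ≤ ‖gF pstar‖ + eps / 4 := by linarith
    have h3 : ‖gF pstar‖ ≤ eps / 2 := by
      have := hLip pstar hpK θstar hθstarK
      rw [hgrad0, sub_zero] at this
      linarith
    have h4 := hmin pstar hpstarT
    linarith
  -- strong convexity both ways
  have A := hsc θhat hθhatK θstar hθstarK
  have B := hsc θstar hθstarK θhat hθhatK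
  rw [hgrad0] at B
  simp only [inner_zero_left] at B
  have hsum : 2 * lam * ‖θhat - θstar‖ ^ 2 ≤ ⟪gF θhat, θhat - θstar⟫_ℝ := by
    have hrev : ⟪gF θhat, θstar - θhat⟫_ℝ = - ⟪gF θhat, θhat - θstar⟫_ℝ := by
      rw [← inner_neg_right]; congr 1; abel
    have hn : ‖θstar - θhat‖ = ‖θhat - θstar‖ := norm_sub_rev _ _
    rw [hrev, hn] at A
    nlinarith [A, B]
  have hcs : ⟪gF θhat, θhat - θstar⟫_ℝ ≤ ‖gF θhat‖ * ‖θhat - θstar‖ :=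
    real_inner_le_norm _ _
  rcases eq_or_lt_of_le (norm_nonneg (θhat - θstar)) with h0 | h0
  · rw [← h0]; positivity
  · have : 2 * lam * ‖θhat - θstar‖ ≤ eps := by
      have := le_trans hsum hcs
      have hle : 2 * lam * ‖θhat - θstar‖ ≤ ‖gF θhat‖ := by
        nlinarith
      linarith
    rw [le_div_iff₀ hlam]
    nlinarith
end

section
/- (Deterministic grid argmin lemma, core of the proof of Proposition 2.) Let λ > 0, k ≥ 1, α ≥ 1, and let F : [−1,1] → ℝ be differentiable with: F λ-strongly convex on [−1,1] (i.e. F(θ₂) ≥ F(θ₁) + F′(θ₁)(θ₂ − θ₁) + λ(θ₂ − θ₁)² for all θ₁, θ₂ ∈ [−1,1]), F′ 1-Lipschitz on [−1,1], and θ* ∈ [−1,1] with F′(θ*) = 0. Let T ⊆ [−1,1] be a nonempty finite set containing some point θ̃ with |θ̃ − θ*| ≤ 1/k, let Ĝ : T → ℝ satisfy |Ĝ(θ) − F′(θ)| ≤ α/k for all θ ∈ T, and let θ̂ ∈ T minimize |Ĝ(θ)| over θ ∈ T. Then |θ̂ − θ*| ≤ 3α/(λk). -/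
/-- **Deterministic grid argmin lemma (core of the proof of Proposition 2).**
If `F : [−1,1] → ℝ` is `λ`-strongly convex with `1`-Lipschitz derivative and minimizer `θ*`
(with `F′(θ*) = 0`), `T ⊆ [−1,1]` is a finite set containing a point `θ̃` with
`|θ̃ − θ*| ≤ 1/k`, `Ĝ` is an `α/k`-accurate approximation of `F′` on `T`, and `θ̂` minimizes
`|Ĝ(θ)|` over `T`, then `|θ̂ − θ*| ≤ 3α/(λk)`. -/
theorem grid_argmin_close_to_minimizer_one_dim
    (lam k α : ℝ) (hlam : 0 < lam) (hk : 1 ≤ k) (hα : 1 ≤ α)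
    (F F' : ℝ → ℝ)
    (hdiff : ∀ θ ∈ Set.Icc (-1 : ℝ) 1, HasDerivWithinAt F (F' θ) (Set.Icc (-1 : ℝ) 1) θ)
    (hsc : ∀ θ₁ ∈ Set.Icc (-1 : ℝ) 1, ∀ θ₂ ∈ Set.Icc (-1 : ℝ) 1,
      F θ₁ + F' θ₁ * (θ₂ - θ₁) + lam * (θ₂ - θ₁) ^ 2 ≤ F θ₂)
    (hLip : ∀ θ ∈ Set.Icc (-1 : ℝ) 1, ∀ θ' ∈ Set.Icc (-1 : ℝ) 1,
      |F' θ - F' θ'| ≤ |θ - θ'|)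
    (θstar : ℝ) (hθstar : θstar ∈ Set.Icc (-1 : ℝ) 1) (hF'θstar : F' θstar = 0)
    (T : Finset ℝ) (hT : ↑T ⊆ Set.Icc (-1 : ℝ) 1) (hTne : T.Nonempty)
    (θtilde : ℝ) (hθtildeT : θtilde ∈ T) (hθtilde : |θtilde - θstar| ≤ 1 / k)
    (Ghat : ℝ → ℝ) (hGhat : ∀ θ ∈ T, |Ghat θ - F' θ| ≤ α / k)
    (θhat : ℝ) (hθhatT : θhat ∈ T) (hmin : ∀ θ ∈ T, |Ghat θhat| ≤ |Ghat θ|) :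
    |θhat - θstar| ≤ 3 * α / (lam * k) := by
  have hk0 : (0:ℝ) < k := lt_of_lt_of_le one_pos hk
  have hθhatI : θhat ∈ Set.Icc (-1:ℝ) 1 := hT hθhatT
  have hθtildeI : θtilde ∈ Set.Icc (-1:ℝ) 1 := hT hθtildeT
  -- |F' θtilde| ≤ 1/k
  have h1 : |F' θtilde| ≤ 1 / k := by
    have := hLip θtilde hθtildeI θstar hθstar
    rw [hF'θstar] at this
    simpa using this.trans hθtilde
  -- |Ghat θhat| ≤ 2α/k
  have h2 : |Ghat θhat| ≤ 2 * α / k := by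
    have hm := hmin θtilde hθtildeT
    have hg := hGhat θtilde hθtildeT
    have : |Ghat θtilde| ≤ |Ghat θtilde - F' θtilde| + |F' θtilde| := by
      have := abs_sub_abs_le_abs_sub (Ghat θtilde) (F' θtilde)
      linarith [abs_nonneg (F' θtilde)]
    have hkk : 1 / k ≤ α / k := by gcongr
    have hr : α / k + α / k = 2 * α / k := by ring
    linarith
  -- |F' θhat| ≤ 3α/k
  have h3 : |F' θhat| ≤ 3 * α / k := by
    have hg := hGhat θhat hθhatT
    have : |F' θhat| ≤ |Ghat θhat| + |Ghat θhat - F' θhat| := by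
      have := abs_sub (Ghat θhat) (F' θhat)
      calc |F' θhat| = |Ghat θhat - (Ghat θhat - F' θhat)| := by ring_nf
        _ ≤ |Ghat θhat| + |Ghat θhat - F' θhat| := abs_sub _ _
    have hr : 2 * α / k + α / k = 3 * α / k := by ring
    linarith
  -- strong convexity: F' θhat * (θhat - θstar) ≥ 2 λ (θhat - θstar)^2
  have hA := hsc θhat hθhatI θstar hθstar
  have hB := hsc θstar hθstar θhat hθhatI
  rw [hF'θstar] at hB
  have key : 2 * lam * (θhat - θstar) ^ 2 ≤ F' θhat * (θhat - θstar) := by nlinarith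
  have h4 : 2 * lam * |θhat - θstar| ≤ |F' θhat| := by
    rcases eq_or_ne θhat θstar with h | h
    · simp [h, abs_nonneg]
    · have hd : 0 < |θhat - θstar| := abs_pos.mpr (sub_ne_zero.mpr h)
      have : F' θhat * (θhat - θstar) ≤ |F' θhat| * |θhat - θstar| := by
        calc F' θhat * (θhat - θstar) ≤ |F' θhat * (θhat - θstar)| := le_abs_self _
          _ = |F' θhat| * |θhat - θstar| := abs_mul _ _
      have hsq : (θhat - θstar)^2 = |θhat - θstar|^2 := (sq_abs _).symm
      nlinarith
  -- conclude
  have h5 : 2 * lam * |θhat - θstar| ≤ 3 * α / k := h4.trans h3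
  rw [le_div_iff₀ (by positivity)] at h5
  rw [le_div_iff₀ (by positivity)]
  nlinarith [abs_nonneg (θhat - θstar)]
end
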